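/- Let p ∈ [1,∞) with dual exponent q, and let U be an n×d real matrix such that ‖z‖_2 ≤ ‖Uz‖_p ≤ √d·‖z‖_2 for all z ∈ ℝ^d. Then: (i) |||U|||_p ≤ d^{1/p+1/2}; (ii) if p ≤ 2 then ‖z‖_q ≤ ‖Uz‖_p for all z ∈ ℝ^d; (iii) if p > 2 then ‖z‖_q ≤ d^{1/q−1/2}·‖Uz‖_p for all z ∈ ℝ^d. -/

import Mathlib

open scoped BigOperators

/-- The entrywise `p`-norm of a vector: `(∑ i, |v i| ^ p) ^ (1/p)`. -/
noncomputable def pnorm (p : ℝ) {n : ℕ} (v : Fin n → ℝ) : ℝ :=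
  (∑ i, |v i| ^ p) ^ (1 / p)

/-- The dual norm of the `p`-norm: the max-norm if `p = 1`, else the `p/(p-1)`-norm. -/
noncomputable def qnorm (p : ℝ) {n : ℕ} (v : Fin n → ℝ) : ℝ :=
  if p = 1 then ⨆ i, |v i| else pnorm (p / (p - 1)) v

/-- The entrywise `p`-norm of a matrix. -/
noncomputable def mpnorm (p : ℝ) {n d : ℕ} (M : Matrix (Fin n) (Fin d) ℝ) : ℝ :=
  (∑ i, ∑ j, |M i j| ^ p) ^ (1 / p)

/-- `U` is an `(α, β, p)`-well-conditioned basis for the column space of `A`. -/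
def IsWCB (p α β : ℝ) {n m d : ℕ} (A : Matrix (Fin n) (Fin m) ℝ)
    (U : Matrix (Fin n) (Fin d) ℝ) : Prop :=
  LinearMap.range U.mulVecLin = LinearMap.range A.mulVecLin ∧
  mpnorm p U ≤ α ∧
  ∀ z : Fin d → ℝ, qnorm p z ≤ β * pnorm p (U.mulVec z)

/-- `S : Ω → Matrix` is a random `n × n` diagonal sampling matrix with probabilities `pr`:
its diagonal entries are mutually independent, with `S ω i i = (pr i) ^ (-1/p)` with
probability `pr i` and `S ω i i = 0` with probability `1 - pr i`. -/
structure IsSamplingMatrix {Ω : Type} [MeasurableSpace Ω] (μ : MeasureTheory.Measure Ω)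
    (p : ℝ) {n : ℕ} (pr : Fin n → ℝ) (S : Ω → Matrix (Fin n) (Fin n) ℝ) : Prop where
  offdiag : ∀ ω i j, i ≠ j → S ω i j = 0
  meas : ∀ i, Measurable fun ω => S ω i i
  prob_val : ∀ i, μ {ω | S ω i i = (pr i) ^ (-(1 / p))} = ENNReal.ofReal (pr i)
  prob_zero : ∀ i, μ {ω | S ω i i = 0} = ENNReal.ofReal (1 - pr i)
  indep : ProbabilityTheory.iIndepFun (fun i ω => S ω i i) μ

open Finset in
lemma pnorm_nonneg (p : ℝ) {m : ℕ} (v : Fin m → ℝ) : 0 ≤ pnorm p v :=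
  Real.rpow_nonneg (Finset.sum_nonneg fun i _ => Real.rpow_nonneg (abs_nonneg _) _) _

lemma sum_rpow_le_rpow_of_exp_le {m : ℕ} {a b : ℝ} (ha : 0 < a) (hab : a ≤ b)
    (v : Fin m → ℝ) : ∑ i, |v i| ^ b ≤ (∑ i, |v i| ^ a) ^ (b / a) := by
  have hb : 0 < b := ha.trans_le hab
  set S := ∑ i, |v i| ^ a with hSdef
  have hS : 0 ≤ S := Finset.sum_nonneg fun i _ => Real.rpow_nonneg (abs_nonneg _) _
  rcases eq_or_lt_of_le hS with h0 | h0
  · have hz : ∀ i, |v i| ^ a = 0 := fun i =>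
      (Finset.sum_eq_zero_iff_of_nonneg (fun i _ => Real.rpow_nonneg (abs_nonneg _) _)).mp
        h0.symm i (Finset.mem_univ i)
    have hz' : ∀ i, v i = 0 := by
      intro i
      have := ((Real.rpow_eq_zero (abs_nonneg _) ha.ne').mp (hz i))
      simpa using this
    simp [hz', Real.zero_rpow hb.ne', Real.zero_rpow (div_pos hb ha).ne', ← h0]
  · have step : ∀ i ∈ Finset.univ, |v i| ^ b ≤ |v i| ^ a * S ^ ((b - a) / a) := by
      intro i _
      rcases eq_or_lt_of_le (abs_nonneg (v i)) with hvi | hvi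
      · rw [← hvi, Real.zero_rpow hb.ne', Real.zero_rpow ha.ne', zero_mul]
      · have h1 : |v i| ^ a ≤ S := Finset.single_le_sum
          (fun j _ => Real.rpow_nonneg (abs_nonneg _) _) (Finset.mem_univ i)
        have h2 : |v i| ^ (b - a) ≤ S ^ ((b - a) / a) := by
          have e1 : |v i| ^ (b - a) = (|v i| ^ a) ^ ((b - a) / a) := by
            rw [← Real.rpow_mul (abs_nonneg _)]
            congr 1
            field_simp
          rw [e1]
          exact Real.rpow_le_rpow (Real.rpow_nonneg (abs_nonneg _) _) h1
            (div_nonneg (by linarith) ha.le)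
        calc |v i| ^ b = |v i| ^ a * |v i| ^ (b - a) := by
              rw [← Real.rpow_add hvi]; ring_nf
          _ ≤ |v i| ^ a * S ^ ((b - a) / a) :=
              mul_le_mul_of_nonneg_left h2 (Real.rpow_nonneg (abs_nonneg _) _)
    calc ∑ i, |v i| ^ b ≤ ∑ i, |v i| ^ a * S ^ ((b - a) / a) := Finset.sum_le_sum step
      _ = S * S ^ ((b - a) / a) := by rw [← Finset.sum_mul]
      _ = S ^ (1 + (b - a) / a) := by rw [Real.rpow_add h0, Real.rpow_one]
      _ = S ^ (b / a) := by congr 1; field_simp; ring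

lemma pnorm_exp_mono {m : ℕ} {a b : ℝ} (ha : 0 < a) (hab : a ≤ b)
    (v : Fin m → ℝ) : pnorm b v ≤ pnorm a v := by
  have hb : 0 < b := ha.trans_le hab
  have hS : 0 ≤ ∑ i, |v i| ^ a := Finset.sum_nonneg fun i _ => Real.rpow_nonneg (abs_nonneg _) _
  unfold pnorm
  calc (∑ i, |v i| ^ b) ^ (1 / b) ≤ ((∑ i, |v i| ^ a) ^ (b / a)) ^ (1 / b) :=
        Real.rpow_le_rpow (Finset.sum_nonneg fun i _ => Real.rpow_nonneg (abs_nonneg _) _)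
          (sum_rpow_le_rpow_of_exp_le ha hab v) (by positivity)
    _ = (∑ i, |v i| ^ a) ^ (1 / a) := by
        rw [← Real.rpow_mul hS]
        congr 1
        field_simp

lemma abs_le_pnorm_two {m : ℕ} (v : Fin m → ℝ) (i : Fin m) : |v i| ≤ pnorm 2 v := by
  have h1 : |v i| ^ (2:ℝ) ≤ ∑ j, |v j| ^ (2:ℝ) := Finset.single_le_sum
    (fun j _ => Real.rpow_nonneg (abs_nonneg _) _) (Finset.mem_univ i)
  have : |v i| = (|v i| ^ (2:ℝ)) ^ (1/2 : ℝ) := by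
    rw [← Real.rpow_mul (abs_nonneg _)]; norm_num
  rw [this]
  exact Real.rpow_le_rpow (Real.rpow_nonneg (abs_nonneg _) _) h1 (by norm_num)

lemma pnorm_le_card_mul_pnorm_two {m : ℕ} {q : ℝ} (hq : 0 < q) (hq2 : q ≤ 2)
    (v : Fin m → ℝ) : pnorm q v ≤ (m : ℝ) ^ (1/q - 1/2) * pnorm 2 v := by
  have hr : (1:ℝ) ≤ 2 / q := (one_le_div hq).mpr hq2
  have key : (∑ i, |v i| ^ q) ^ (2/q) ≤ (m : ℝ) ^ (2/q - 1) * ∑ i, |v i| ^ (2:ℝ) := by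
    have := Real.rpow_sum_le_const_mul_sum_rpow_of_nonneg (Finset.univ : Finset (Fin m))
      (f := fun i => |v i| ^ q) hr (fun i _ => Real.rpow_nonneg (abs_nonneg _) _)
    simpa [← Real.rpow_mul (abs_nonneg _), mul_div_cancel₀ _ hq.ne'] using this
  have hS : 0 ≤ ∑ i, |v i| ^ q := Finset.sum_nonneg fun i _ => Real.rpow_nonneg (abs_nonneg _) _
  have hS2 : 0 ≤ ∑ i, |v i| ^ (2:ℝ) := Finset.sum_nonneg fun i _ => Real.rpow_nonneg (abs_nonneg _) _
  have e1 : pnorm q v = ((∑ i, |v i| ^ q) ^ (2/q)) ^ (1/2 : ℝ) := by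
    rw [pnorm, ← Real.rpow_mul hS]
    congr 1
    field_simp
  rw [e1]
  calc ((∑ i, |v i| ^ q) ^ (2/q)) ^ (1/2:ℝ)
      ≤ ((m : ℝ) ^ (2/q - 1) * ∑ i, |v i| ^ (2:ℝ)) ^ (1/2:ℝ) :=
        Real.rpow_le_rpow (Real.rpow_nonneg hS _) key (by norm_num)
    _ = (m : ℝ) ^ (1/q - 1/2) * pnorm 2 v := by
        rw [Real.mul_rpow (Real.rpow_nonneg (Nat.cast_nonneg _) _) hS2,
          ← Real.rpow_mul (Nat.cast_nonneg _), pnorm]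
        congr 2
        field_simp


lemma pnorm_two_single {m : ℕ} (j : Fin m) : pnorm 2 (Pi.single j (1:ℝ)) = 1 := by
  unfold pnorm
  have : ∀ i : Fin m, |(Pi.single j 1 : Fin m → ℝ) i| ^ (2:ℝ) = if i = j then (1:ℝ) else 0 := by
    intro i
    rcases eq_or_ne i j with h | h
    · subst h; simp [Pi.single_eq_same]
    · simp [Pi.single_apply, h, Real.zero_rpow (by norm_num : (2:ℝ) ≠ 0)]
  rw [Finset.sum_congr rfl (fun i _ => this i)]
  simp


/-- **From the `ℓ₂` sandwich to well-conditioning.**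
Let `p ∈ [1, ∞)` with dual exponent `q`, and let `U` be an `n × d` real matrix such that
`‖z‖₂ ≤ ‖U z‖_p ≤ √d · ‖z‖₂` for all `z`.  Then (i) `|||U|||_p ≤ d^(1/p + 1/2)`;
(ii) if `p ≤ 2` then `‖z‖_q ≤ ‖U z‖_p` for all `z`; (iii) if `p > 2` then
`‖z‖_q ≤ d^(1/q - 1/2) · ‖U z‖_p` for all `z` (where `1/q = 1 - 1/p`). -/
theorem sandwich_implies_wcb_bounds {n d : ℕ} (U : Matrix (Fin n) (Fin d) ℝ) (p : ℝ)
    (hp : 1 ≤ p)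
    (hU : ∀ z : Fin d → ℝ,
      pnorm 2 z ≤ pnorm p (U.mulVec z) ∧ pnorm p (U.mulVec z) ≤ Real.sqrt d * pnorm 2 z) :
    mpnorm p U ≤ (d : ℝ) ^ (1 / p + 1 / 2) ∧
    (p ≤ 2 → ∀ z : Fin d → ℝ, qnorm p z ≤ pnorm p (U.mulVec z)) ∧
    (2 < p → ∀ z : Fin d → ℝ,
      qnorm p z ≤ (d : ℝ) ^ ((1 - 1 / p) - 1 / 2) * pnorm p (U.mulVec z)) := by
  have hp0 : 0 < p := lt_of_lt_of_le one_pos hp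
  refine ⟨?_, ?_, ?_⟩
  · -- part (i)
    -- column sums
    have hcol : ∀ j : Fin d, ∑ i, |U i j| ^ p ≤ (d : ℝ) ^ (p / 2) := by
      intro j
      have h1 := (hU (Pi.single j 1)).2
      have h2 : U.mulVec (Pi.single j (1:ℝ)) = fun i => U i j := by
        funext i
        simp [Matrix.mulVec_single]
      rw [h2, pnorm_two_single] at h1
      have h3 : pnorm p (fun i => U i j) ≤ (d:ℝ) ^ (1/2 : ℝ) := by
        rw [← Real.sqrt_eq_rpow]
        simpa using h1
      have h4 : (pnorm p (fun i => U i j)) ^ p ≤ ((d:ℝ) ^ (1/2 : ℝ)) ^ p :=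
        Real.rpow_le_rpow (pnorm_nonneg _ _) h3 hp0.le
    
      have h5 : (pnorm p (fun i => U i j)) ^ p = ∑ i, |U i j| ^ p := by
        rw [pnorm, ← Real.rpow_mul
          (Finset.sum_nonneg fun i _ => Real.rpow_nonneg (abs_nonneg _) _),
          one_div, inv_mul_cancel₀ hp0.ne', Real.rpow_one]
      rw [h5, ← Real.rpow_mul (Nat.cast_nonneg _)] at h4
      calc ∑ i, |U i j| ^ p ≤ (d:ℝ) ^ (1/2 * p) := h4
        _ = (d:ℝ) ^ (p / 2) := by rw [show (1/2 : ℝ) * p = p/2 by ring]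
    have hsum : ∑ i, ∑ j, |U i j| ^ p ≤ (d:ℝ) ^ (1 + p/2) := by
      rw [Finset.sum_comm]
      calc ∑ j, ∑ i, |U i j| ^ p ≤ ∑ _j : Fin d, (d : ℝ) ^ (p/2) :=
            Finset.sum_le_sum fun j _ => hcol j
        _ = d * (d:ℝ) ^ (p/2) := by simp [mul_comm]
        _ ≤ (d:ℝ) ^ (1 + p/2) := by
            rcases Nat.eq_zero_or_pos d with hd | hd
            · simp [hd, Real.zero_rpow (by positivity : (1 + p/2) ≠ 0)]
            · rw [Real.rpow_add (by exact_mod_cast hd), Real.rpow_one]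
    have hmp : mpnorm p U ≤ ((d:ℝ) ^ (1 + p/2)) ^ (1/p) :=
      Real.rpow_le_rpow (Finset.sum_nonneg fun i _ =>
        Finset.sum_nonneg fun j _ => Real.rpow_nonneg (abs_nonneg _) _) hsum (by positivity)
    calc mpnorm p U ≤ ((d:ℝ) ^ (1 + p/2)) ^ (1/p) := hmp
      _ = (d:ℝ) ^ (1/p + 1/2) := by
          rw [← Real.rpow_mul (Nat.cast_nonneg _)]
          congr 1
          field_simp
  · -- part (ii)
    intro hp2 z
    have hz2 : pnorm 2 z ≤ pnorm p (U.mulVec z) := (hU z).1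
    unfold qnorm
    rcases eq_or_ne p 1 with hp1 | hp1
    · rw [if_pos hp1]
      rcases Nat.eq_zero_or_pos d with hd | hd
      · subst hd
        rw [show (⨆ i : Fin 0, |z i|) = 0 by
          rw [iSup_of_empty']; exact Real.sSup_empty]
        exact le_trans (pnorm_nonneg 2 z) hz2
      · haveI : Nonempty (Fin d) := Fin.pos_iff_nonempty.mp hd
        exact le_trans (ciSup_le fun i => abs_le_pnorm_two z i) hz2
    · rw [if_neg hp1]
      have hp1' : 1 < p := lt_of_le_of_ne hp hp1.symm
      have hq2 : 2 ≤ p / (p - 1) := by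
        rw [le_div_iff₀ (by linarith)]
        linarith
      exact le_trans (pnorm_exp_mono two_pos hq2 z) hz2
  · -- part (iii)
    intro hp2 z
    have hp1 : p ≠ 1 := by linarith
    have hq0 : 0 < p / (p - 1) := div_pos (by linarith) (by linarith)
    have hq2 : p / (p - 1) ≤ 2 := by
      rw [div_le_iff₀ (by linarith)]
      linarith
    have heq : 1 / (p / (p - 1)) - 1/2 = (1 - 1/p) - 1/2 := by
      field_simp
    unfold qnorm
    rw [if_neg hp1]
    calc pnorm (p / (p-1)) z ≤ (d:ℝ) ^ (1 / (p/(p-1)) - 1/2) * pnorm 2 z :=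
          pnorm_le_card_mul_pnorm_two hq0 hq2 z
      _ = (d:ℝ) ^ ((1 - 1/p) - 1/2) * pnorm 2 z := by rw [heq]
      _ ≤ (d:ℝ) ^ ((1 - 1/p) - 1/2) * pnorm p (U.mulVec z) :=
          mul_le_mul_of_nonneg_left (hU z).1 (Real.rpow_nonneg (Nat.cast_nonneg _) _)
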